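/- Let e be a consistent comparison table on levels l_1,...,l_t, with fixed reference utilities u(l_p) and u(l_q) (p < q, u(l_p) < u(l_q)) and α = (u(l_q)-u(l_p))/(e(p,q)+1). Define u(l_k) = u(l_p) + (e(p,k)+1)α for k > p and u(l_k) = u(l_p) - (e(k,p)+1)α for k < p. Then u is strictly increasing: u(l_1) < u(l_2) < ... < u(l_t). -/
import Mathlib


theorem stmt_4 (t : ℕ) (e : ℕ → ℕ → ℕ)
    (hcons : ∀ a b c, 1 ≤ a → a < b → b < c → c ≤ t →
      e a b + e b c + 1 = e a c)
    (p q : ℕ) (hp : 1 ≤ p) (hpq : p < q) (hq : q ≤ t)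
    (u : ℕ → ℝ) (hupq : u p < u q)
    (α : ℝ) (hα : α = (u q - u p) / ((e p q : ℝ) + 1))
    (huAbove : ∀ k, p < k → k ≤ t → u k = u p + ((e p k : ℝ) + 1) * α)
    (huBelow : ∀ k, 1 ≤ k → k < p → u k = u p - ((e k p : ℝ) + 1) * α) :
    ∀ k, 1 ≤ k → k < t → u k < u (k + 1) := by
  have hαpos : 0 < α := by
    rw [hα]
    apply div_pos (by linarith)
    positivity
  intro k hk hkt
  rcases lt_trichotomy (k + 1) p with h | h | h
  · -- k+1 < p
    rw [huBelow k hk (by omega), huBelow (k + 1) (by omega) h]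
    have := hcons k (k + 1) p hk (by omega) h (by omega)
    have : (e (k+1) p : ℝ) + 1 < (e k p : ℝ) + 1 := by
      push_cast [← this]; linarith [Nat.cast_nonneg (α := ℝ) (e k (k+1))]
    nlinarith
  · -- k+1 = p
    rw [huBelow k hk (by omega), h]
    nlinarith [Nat.cast_nonneg (α := ℝ) (e k p)]
  · -- k+1 > p
    rw [huAbove (k + 1) h (by omega)]
    rcases eq_or_lt_of_le (Nat.lt_succ_iff.mp h) with h2 | h2
    · rw [← h2]
      nlinarith [Nat.cast_nonneg (α := ℝ) (e p (k+1))]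
    · rw [huAbove k h2 (by omega)]
      have := hcons p k (k + 1) hp h2 (by omega) (by omega)
      have : (e p k : ℝ) + 1 < (e p (k+1) : ℝ) + 1 := by
        push_cast [← this]; linarith [Nat.cast_nonneg (α := ℝ) (e k (k+1))]
      nlinarith
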